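/- For the antipode S of a Hopf algebra H and any Hochschild 1-cocycle L (satisfying Δ∘L = (id ⊗ L)∘Δ + L ⊗ 1), one has S ∘ L = −S ⋆ L, i.e. S(L(x)) = −Σ S(x₁)L(x₂) for all x. -/
import Mathlib

open TensorProduct

variable {K : Type*} [Field K]
variable {H : Type*} [Ring H] [HopfAlgebra K H]

lemma algebraMap_counit_cocycle_eq_zero
    (L : H →ₗ[K] H)
    (hL : ∀ x : H, Coalgebra.comul (R := K) (L x) =
      (TensorProduct.map LinearMap.id L) (Coalgebra.comul (R := K) x) +
        L x ⊗ₜ[K] (1 : H)) :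
    ∀ x : H, algebraMap K H (Coalgebra.counit (R := K) (L x)) = 0 := by
  intro x
  have hid : TensorProduct.map (LinearMap.id (M := H)) L = L.lTensor H := rfl
  have h := congrArg (LinearMap.rTensor H (Coalgebra.counit (R := K))) (hL x)
  rw [Coalgebra.rTensor_counit_comul, map_add, LinearMap.rTensor_tmul, hid,
    ← LinearMap.comp_apply, LinearMap.rTensor_comp_lTensor,
    ← LinearMap.lTensor_comp_rTensor, LinearMap.comp_apply,
    Coalgebra.rTensor_counit_comul, LinearMap.lTensor_tmul] at h
  have h0 : (Coalgebra.counit (R := K) (L x)) ⊗ₜ[K] (1 : H) = (0 : K ⊗[K] H) := by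
    rwa [left_eq_add] at h
  have := congrArg (TensorProduct.lid K H) h0
  simpa [Algebra.smul_def] using this

theorem antipode_comp_cocycle
    (L : H →ₗ[K] H)
    (hL : ∀ x : H, Coalgebra.comul (R := K) (L x) =
      (TensorProduct.map LinearMap.id L) (Coalgebra.comul (R := K) x) +
        L x ⊗ₜ[K] (1 : H)) :
    ∀ x : H, HopfAlgebra.antipode (R := K) (L x) =
      -(LinearMap.mul' K H)
        ((TensorProduct.map (HopfAlgebra.antipode (R := K)) L)
          (Coalgebra.comul (R := K) x)) := by
  intro x
  have hid : TensorProduct.map (LinearMap.id (M := H)) L = L.lTensor H := rfl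
  have h := congrArg (fun t => LinearMap.mul' K H
      ((HopfAlgebra.antipode (R := K)).rTensor H t)) (hL x)
  simp only [map_add] at h
  rw [HopfAlgebra.mul_antipode_rTensor_comul_apply,
    algebraMap_counit_cocycle_eq_zero L hL x, hid,
    ← LinearMap.comp_apply ((HopfAlgebra.antipode (R := K)).rTensor H),
    LinearMap.rTensor_comp_lTensor, LinearMap.rTensor_tmul] at h
  simp only [LinearMap.mul'_apply, mul_one] at h
  exact eq_neg_of_add_eq_zero_right h.symm
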